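/- arXiv:1503.06173 — 2 statements merged into one kernel-verified Lean document; each statement's English description precedes it below -/
import Mathlib

section
/- For integers n \ge 1 and k \ge 1, J_n^k = J_n^{k-1} + \sum_{s=0}^{n-1} \binom{n}{s} J_s^{k-1} J_{n-s}^0. -/
open Finset

/-- Stirling numbers of the second kind. -/
def stirling2 : ℕ → ℕ → ℕ
  | 0, 0 => 1
  | 0, _ + 1 => 0
  | _ + 1, 0 => 0
  | n + 1, k + 1 => (k + 1) * stirling2 n (k + 1) + stirling2 n k

/-- Fubini numbers: number of preferential arrangements of an n-set. -/
def fubini (n : ℕ) : ℕ := ∑ s ∈ range (n + 1), stirling2 n s * s.factorial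

/-- Number of barred preferential arrangements of an n-set with m bars. -/
def barred (n m : ℕ) : ℕ :=
  ∑ s ∈ range (n + 1), stirling2 n s * s.factorial * (m + s).choose m

/-- Number of restricted barred preferential arrangements. -/
def restrictedBarred (n m : ℕ) : ℕ :=
  ∑ s ∈ range (n + 1), n.choose s * m ^ s * fubini (n - s)

def F (n s : ℕ) : ℕ := stirling2 n s * s.factorial

lemma stirling2_eq_zero : ∀ {n s : ℕ}, n < s → stirling2 n s = 0 := by
  intro n
  induction n with
  | zero => intro s h; cases s with
    | zero => omega
    | succ s => rfl
  | succ n ih =>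
    intro s h
    cases s with
    | zero => omega
    | succ s =>
      have h1 : n < s + 1 := by omega
      have h2 : n < s := by omega
      simp [stirling2, ih h1, ih h2]

lemma F_eq_zero {n s : ℕ} (h : n < s) : F n s = 0 := by
  simp [F, stirling2_eq_zero h]

lemma F_succ_succ (n v : ℕ) : F (n + 1) (v + 1) = (v + 1) * (F n (v + 1) + F n v) := by
  simp only [F, stirling2, Nat.factorial_succ]
  ring

lemma F_succ_zero (n : ℕ) : F (n + 1) 0 = 0 := by simp [F, stirling2]

lemma conv (n : ℕ) : ∀ t u : ℕ,
    ∑ j ∈ range (n + 1), n.choose j * F j t * F (n - j) u = F n (t + u) := by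
  induction n with
  | zero =>
    intro t u
    cases t <;> cases u <;> simp [F, stirling2]
  | succ n ih =>
    intro t u
    have hsplit : ∑ j ∈ range (n + 2), (n + 1).choose j * F j t * F (n + 1 - j) u =
        (∑ j ∈ range (n + 1), n.choose j * F (j + 1) t * F (n - j) u) +
        ∑ j ∈ range (n + 1), n.choose j * F j t * F (n - j + 1) u := by
      rw [Finset.sum_range_succ']
      have e1 : ∀ j ∈ range (n + 1),
          (n + 1).choose (j + 1) * F (j + 1) t * F (n + 1 - (j + 1)) u =
          n.choose j * F (j + 1) t * F (n - j) u
            + n.choose (j + 1) * F (j + 1) t * F (n + 1 - (j + 1)) u := by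
        intro j hj
        have hs : n + 1 - (j + 1) = n - j := by omega
        rw [hs, Nat.choose_succ_succ]
        ring
      rw [Finset.sum_congr rfl e1, Finset.sum_add_distrib]
      have e2 : (∑ j ∈ range (n + 1),
            n.choose (j + 1) * F (j + 1) t * F (n + 1 - (j + 1)) u)
            + (n + 1).choose 0 * F 0 t * F (n + 1 - 0) u =
          ∑ j ∈ range (n + 2), n.choose j * F j t * F (n + 1 - j) u := by
        rw [Finset.sum_range_succ' (fun j => n.choose j * F j t * F (n + 1 - j) u) (n + 1)]
        norm_num
      have e4 : ∑ j ∈ range (n + 2), n.choose j * F j t * F (n + 1 - j) u =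
          ∑ j ∈ range (n + 1), n.choose j * F j t * F (n - j + 1) u := by
        rw [Finset.sum_range_succ, Nat.choose_succ_self]
        simp only [zero_mul, add_zero]
        apply Finset.sum_congr rfl
        intro j hj
        rw [mem_range] at hj
        congr 2
        omega
      rw [add_assoc, e2, e4]
    rw [hsplit]
    cases t with
    | zero =>
      cases u with
      | zero =>
        simp [F_succ_zero, F_succ_succ]
      | succ b =>
        have e : ∀ j ∈ range (n + 1),
            n.choose j * F j 0 * F (n - j + 1) (b + 1) =
            (b + 1) * (n.choose j * F j 0 * F (n - j) (b + 1))
              + (b + 1) * (n.choose j * F j 0 * F (n - j) b) := by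
          intro j _
          rw [F_succ_succ]
          ring
        rw [Finset.sum_congr rfl e, Finset.sum_add_distrib, ← Finset.mul_sum, ← Finset.mul_sum,
          ih 0 (b + 1), ih 0 b]
        simp [F_succ_zero, F_succ_succ]
        ring
    | succ a =>
      have eA : ∀ j ∈ range (n + 1),
          n.choose j * F (j + 1) (a + 1) * F (n - j) u =
          (a + 1) * (n.choose j * F j (a + 1) * F (n - j) u)
            + (a + 1) * (n.choose j * F j a * F (n - j) u) := by
        intro j _
        rw [F_succ_succ]
        ring
      rw [Finset.sum_congr rfl eA, Finset.sum_add_distrib, ← Finset.mul_sum, ← Finset.mul_sum,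
        ih (a + 1) u, ih a u]
      cases u with
      | zero =>
        have e : ∀ j ∈ range (n + 1),
            n.choose j * F j (a + 1) * F (n - j + 1) 0 = 0 := by
          intro j _; simp [F_succ_zero]
        rw [Finset.sum_congr rfl e]
        simp [F_succ_succ]
        ring
      | succ b =>
        have e : ∀ j ∈ range (n + 1),
            n.choose j * F j (a + 1) * F (n - j + 1) (b + 1) =
            (b + 1) * (n.choose j * F j (a + 1) * F (n - j) (b + 1))
              + (b + 1) * (n.choose j * F j (a + 1) * F (n - j) b) := by
          intro j _
          rw [F_succ_succ]
          ring
        rw [Finset.sum_congr rfl e, Finset.sum_add_distrib, ← Finset.mul_sum, ← Finset.mul_sum,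
          ih (a + 1) (b + 1), ih (a + 1) b]
        have h1 : a + 1 + (b + 1) = (a + (b + 1)) + 1 := by omega
        have h2 : a + 1 + b = a + (b + 1) := by omega
        rw [h1, h2, F_succ_succ]
        ring

lemma barred_zero (r : ℕ) : barred r 0 = fubini r := by
  simp [barred, fubini]

lemma main_conv (n m : ℕ) :
    barred n (m + 1) = ∑ j ∈ range (n + 1), n.choose j * barred j m * fubini (n - j) := by
  calc barred n (m + 1)
      = ∑ s ∈ range (n + 1), ∑ t ∈ range (s + 1), (m + t).choose m * F n s := by
        rw [barred]
        refine Finset.sum_congr rfl fun s _ => ?_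
        rw [show m + 1 + s = s + m + 1 by omega, ← Nat.sum_range_add_choose s m,
          Finset.mul_sum]
        refine Finset.sum_congr rfl fun t _ => ?_
        simp only [F]
        rw [Nat.add_comm t m]
        ring
    _ = ∑ t ∈ range (n + 1), ∑ s ∈ Finset.Ico t (n + 1), (m + t).choose m * F n s := by
        symm
        rw [range_eq_Ico, Finset.sum_Ico_Ico_comm]
        simp only [range_eq_Ico]
    _ = ∑ t ∈ range (n + 1), ∑ u ∈ range (n + 1), (m + t).choose m * F n (t + u) := by
        refine Finset.sum_congr rfl fun t ht => ?_
        rw [mem_range] at ht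
        rw [Finset.sum_Ico_eq_sum_range]
        apply Finset.sum_subset (Finset.range_subset_range.mpr (by omega))
        intro u _ hu
        rw [mem_range] at hu
        rw [F_eq_zero (show n < t + u by omega), mul_zero]
    _ = ∑ t ∈ range (n + 1), ∑ u ∈ range (n + 1), ∑ j ∈ range (n + 1),
          (m + t).choose m * (n.choose j * F j t * F (n - j) u) := by
        refine Finset.sum_congr rfl fun t _ => Finset.sum_congr rfl fun u _ => ?_
        rw [← Finset.mul_sum, conv n t u]
    _ = ∑ j ∈ range (n + 1), ∑ t ∈ range (n + 1), ∑ u ∈ range (n + 1),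
          (m + t).choose m * (n.choose j * F j t * F (n - j) u) := by
        exact (Finset.sum_congr rfl fun t _ => Finset.sum_comm).trans Finset.sum_comm
    _ = ∑ j ∈ range (n + 1), n.choose j * barred j m * fubini (n - j) := by
        refine Finset.sum_congr rfl fun j hj => ?_
        rw [mem_range] at hj
        have hb : barred j m
            = ∑ t ∈ range (n + 1), stirling2 j t * t.factorial * (m + t).choose m := by
          rw [barred]
          apply Finset.sum_subset (Finset.range_subset_range.mpr (by omega))
          intro t _ ht
          rw [mem_range] at ht
          rw [stirling2_eq_zero (show j < t by omega), zero_mul, zero_mul]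
        have hf : fubini (n - j)
            = ∑ u ∈ range (n + 1), stirling2 (n - j) u * u.factorial := by
          rw [fubini]
          apply Finset.sum_subset (Finset.range_subset_range.mpr (by omega))
          intro u _ hu
          rw [mem_range] at hu
          rw [stirling2_eq_zero (show n - j < u by omega), zero_mul]
        rw [hb, hf, Finset.sum_comm]
        simp only [Finset.mul_sum, Finset.sum_mul]
        refine Finset.sum_congr rfl fun u _ => Finset.sum_congr rfl fun t _ => ?_
        simp only [F]
        ring

theorem barred_split_first_section (n k : ℕ) (hn : 1 ≤ n) (hk : 1 ≤ k) :
    barred n k = barred n (k - 1) +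
      ∑ s ∈ range n, n.choose s * barred s (k - 1) * barred (n - s) 0 := by
  obtain ⟨m, rfl⟩ : ∃ m, k = m + 1 := ⟨k - 1, by omega⟩
  simp only [Nat.add_sub_cancel]
  rw [main_conv n m, Finset.sum_range_succ, Nat.choose_self, Nat.sub_self]
  have : fubini 0 = 1 := by simp [fubini, stirling2]
  rw [this]
  have e : ∀ s ∈ range n, n.choose s * barred s m * fubini (n - s)
      = n.choose s * barred s m * barred (n - s) 0 := by
    intro s _; rw [barred_zero]
  rw [Finset.sum_congr rfl e]
  ring
end

section
/- For every nonnegative integer n, 2 I_n^1 - 1 = I_n^2, where I_n^m = \sum_{s=0}^{n} \binom{n}{s} m^s J_{n-s}. -/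
open Finset

lemma stirling2_eq_zero_s11 {n k : ℕ} (h : n < k) : stirling2 n k = 0 := by
  induction n generalizing k with
  | zero => cases k with
    | zero => omega
    | succ k => rfl
  | succ n ih =>
    cases k with
    | zero => omega
    | succ k =>
      show (k + 1) * stirling2 n (k + 1) + stirling2 n k = 0
      rw [ih (by omega), ih (by omega)]
      ring

lemma stirling2_binom (n t : ℕ) :
    stirling2 (n + 1) (t + 1) = ∑ j ∈ range (n + 1), n.choose j * stirling2 j t := by
  induction n generalizing t with
  | zero => simp [stirling2]
  | succ n ih =>
    rw [Finset.sum_range_succ']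
    have h1 : ∀ j ∈ range (n + 1),
        (n + 1).choose (j + 1) * stirling2 (j + 1) t
          = n.choose j * stirling2 (j + 1) t + n.choose (j + 1) * stirling2 (j + 1) t := by
      intro j _
      rw [Nat.choose_succ_succ, Nat.add_mul]
    rw [Finset.sum_congr rfl h1, Finset.sum_add_distrib]
    simp only [Nat.choose_zero_right, one_mul]
    have h2 : (∑ j ∈ range (n + 1), n.choose (j + 1) * stirling2 (j + 1) t)
        + stirling2 0 t
          = ∑ j ∈ range (n + 1), n.choose j * stirling2 j t := by
      have h := Finset.sum_range_succ' (fun j => n.choose j * stirling2 j t) (n + 1)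
      rw [Finset.sum_range_succ] at h
      simpa [Nat.choose_succ_self] using h.symm
    rw [add_assoc _ _ (stirling2 0 t), h2, ← ih]
    cases t with
    | zero =>
      have hz : ∀ j ∈ range (n + 1), n.choose j * stirling2 (j + 1) 0 = 0 := by
        intro j _
        have : stirling2 (j + 1) 0 = 0 := rfl
        simp [this]
      rw [Finset.sum_congr rfl hz, Finset.sum_const_zero]
      have hL : stirling2 (n + 1 + 1) 1 = 1 * stirling2 (n + 1) 1 + stirling2 (n + 1) 0 := rfl
      have h0 : stirling2 (n + 1) 0 = 0 := rfl
      rw [hL, h0]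
      ring
    | succ u =>
      have hs : ∀ j ∈ range (n + 1), n.choose j * stirling2 (j + 1) (u + 1)
          = (u + 1) * (n.choose j * stirling2 j (u + 1)) + n.choose j * stirling2 j u := by
        intro j _
        show n.choose j * ((u + 1) * stirling2 j (u + 1) + stirling2 j u) = _
        ring
      rw [Finset.sum_congr rfl hs, Finset.sum_add_distrib, ← Finset.mul_sum, ← ih, ← ih]
      show (u + 1 + 1) * stirling2 (n + 1) (u + 1 + 1) + stirling2 (n + 1) (u + 1)
          = (u + 1) * stirling2 (n + 1) (u + 1 + 1) + stirling2 (n + 1) (u + 1)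
            + stirling2 (n + 1) (u + 1 + 1)
      ring

/-- Binomial transform of Fubini numbers. -/
lemma binom_fubini (n : ℕ) :
    ∑ j ∈ range (n + 1), n.choose j * fubini j
      = ∑ t ∈ range (n + 1), stirling2 (n + 1) (t + 1) * t.factorial := by
  have h1 : ∀ j ∈ range (n + 1), n.choose j * fubini j
      = ∑ t ∈ range (n + 1), n.choose j * stirling2 j t * t.factorial := by
    intro j hj
    rw [Finset.mem_range] at hj
    unfold fubini
    rw [Finset.mul_sum]
    rw [Finset.sum_subset (Finset.range_subset_range.2 (by omega : j + 1 ≤ n + 1))]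
    · exact Finset.sum_congr rfl fun t _ => by ring
    · intro t _ ht
      rw [Finset.mem_range, not_lt] at ht
      rw [stirling2_eq_zero_s11 (by omega)]
      ring
  rw [Finset.sum_congr rfl h1, Finset.sum_comm]
  refine Finset.sum_congr rfl fun t _ => ?_
  rw [stirling2_binom, Finset.sum_mul]

lemma two_fubini (n : ℕ) :
    (∑ t ∈ range (n + 1), stirling2 (n + 1) (t + 1) * t.factorial) + stirling2 n 0
      = 2 * fubini n := by
  have h1 : ∀ t ∈ range (n + 1), stirling2 (n + 1) (t + 1) * t.factorial
      = stirling2 n (t + 1) * (t + 1).factorial + stirling2 n t * t.factorial := by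
    intro t _
    show ((t + 1) * stirling2 n (t + 1) + stirling2 n t) * t.factorial = _
    rw [Nat.factorial_succ]
    ring
  rw [Finset.sum_congr rfl h1, Finset.sum_add_distrib]
  have h := Finset.sum_range_succ' (fun t => stirling2 n t * t.factorial) (n + 1)
  rw [Finset.sum_range_succ, stirling2_eq_zero_s11 (Nat.lt_succ_self n), zero_mul, add_zero] at h
  simp only [Nat.factorial_zero, mul_one] at h
  have h3 : (∑ t ∈ range (n + 1), stirling2 n t * t.factorial) = fubini n := rfl
  rw [h3] at h
  omega

lemma rb1 (n : ℕ) : restrictedBarred n 1 + stirling2 n 0 = 2 * fubini n := by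
  unfold restrictedBarred
  have e1 : ∀ s ∈ range (n + 1), n.choose s * 1 ^ s * fubini (n - s)
      = n.choose (n - s) * fubini (n - s) := by
    intro s hs
    rw [Finset.mem_range] at hs
    simp only [one_pow, mul_one]
    rw [Nat.choose_symm (by omega)]
  have hrefl := Finset.sum_range_reflect (fun j => n.choose j * fubini j) (n + 1)
  simp only [Nat.add_sub_cancel] at hrefl
  rw [Finset.sum_congr rfl e1, hrefl, binom_fubini]
  exact two_fubini n

lemma rb2 (n : ℕ) : restrictedBarred n 2
    = ∑ k ∈ range (n + 1), n.choose k * restrictedBarred (n - k) 1 := by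
  unfold restrictedBarred
  have e1 : ∀ s ∈ range (n + 1), n.choose s * 2 ^ s * fubini (n - s)
      = ∑ k ∈ range (n + 1),
          (if k ≤ s then n.choose k * ((n - k).choose (s - k)) * fubini (n - s) else 0) := by
    intro s hs
    rw [Finset.mem_range] at hs
    have h2 : (2 : ℕ) ^ s = ∑ k ∈ range (s + 1), s.choose k := (Nat.sum_range_choose s).symm
    rw [h2, Finset.mul_sum, Finset.sum_mul]
    have hfil : range (s + 1) = (range (n + 1)).filter (fun k => k ≤ s) := by
      ext k
      simp only [Finset.mem_range, Finset.mem_filter]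
      omega
    rw [hfil, Finset.sum_filter]
    refine Finset.sum_congr rfl fun k _ => ?_
    by_cases hk : k ≤ s
    · rw [if_pos hk, if_pos hk, Nat.choose_mul hk]
    · rw [if_neg hk, if_neg hk]
  rw [Finset.sum_congr rfl e1, Finset.sum_comm]
  refine Finset.sum_congr rfl fun k hk => ?_
  rw [Finset.mem_range] at hk
  have hfil2 : (range (n + 1)).filter (fun s => k ≤ s) = Finset.Ico k (n + 1) := by
    ext s
    simp only [Finset.mem_range, Finset.mem_filter, Finset.mem_Ico]
    omega
  rw [← Finset.sum_filter, hfil2, Finset.sum_Ico_eq_sum_range]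
  have hr : n + 1 - k = (n - k) + 1 := by omega
  rw [hr, Finset.mul_sum]
  refine Finset.sum_congr rfl fun j hj => ?_
  have h1 : k + j - k = j := by omega
  have h2 : n - (k + j) = n - k - j := by omega
  rw [h1, h2, one_pow]
  ring

theorem restricted_one_two (n : ℕ) :
    2 * restrictedBarred n 1 - 1 = restrictedBarred n 2 := by
  have h1 : (∑ k ∈ range (n + 1), n.choose k * stirling2 (n - k) 0) = 1 := by
    rw [Finset.sum_eq_single n]
    · simp [stirling2]
    · intro k hk hne
      rw [Finset.mem_range] at hk
      have h : n - k = (n - k - 1) + 1 := by omega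
      rw [h]
      have h0 : stirling2 (n - k - 1 + 1) 0 = 0 := rfl
      simp [h0]
    · intro h
      exact absurd (Finset.self_mem_range_succ n) h
  have key : restrictedBarred n 2 + (∑ k ∈ range (n + 1), n.choose k * stirling2 (n - k) 0)
      = 2 * restrictedBarred n 1 := by
    rw [rb2, ← Finset.sum_add_distrib]
    have e : ∀ k ∈ range (n + 1),
        n.choose k * restrictedBarred (n - k) 1 + n.choose k * stirling2 (n - k) 0
          = 2 * (n.choose k * 1 ^ k * fubini (n - k)) := by
      intro k _
      rw [← Nat.mul_add, rb1, one_pow]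
      ring
    rw [Finset.sum_congr rfl e, ← Finset.mul_sum]
    rfl
  omega
end
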